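/- For every positive integer k, ∑_{i=1}^∞ (1/(i+k)) · C(2i,i)/4^i = (4^k / (k·C(2k,k))) − 1/k. -/

import Mathlib

open scoped BigOperators
open Real

noncomputable def cb (k : ℕ) : ℝ := (Nat.choose (2*k) k : ℝ) / 4^k

noncomputable def H (k : ℕ) : ℝ := ∑ j ∈ Finset.range k, (1:ℝ)/(j+1)

noncomputable def oh (k : ℕ) : ℝ := ∑ j ∈ Finset.range k, (1:ℝ)/(2*j+1)

lemma cb_pos (k : ℕ) : 0 < cb k := by
  unfold cb
  apply div_pos
  · exact_mod_cast Nat.choose_pos (by omega)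
  · positivity

lemma cb_succ (k : ℕ) : cb (k+1) = cb k * (2*k+1) / (2*k+2) := by
  have h := Nat.succ_mul_centralBinom_succ k
  simp only [Nat.centralBinom] at h
  have h' : ((k:ℝ)+1) * (Nat.choose (2*(k+1)) (k+1) : ℝ)
      = 2 * (2*(k:ℝ)+1) * (Nat.choose (2*k) k : ℝ) := by
    exact_mod_cast congrArg (Nat.cast : ℕ → ℝ) h
  unfold cb
  rw [pow_succ]
  have hk1 : ((k:ℝ)+1) ≠ 0 := by positivity
  have h4 : (4:ℝ)^k ≠ 0 := by positivity
  field_simp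
  linear_combination 2 * h'

lemma cb_one : cb 1 = 1/2 := by
  norm_num [cb]

lemma cb_sq (k : ℕ) : (cb k)^2 * (2*k+1) ≤ 1 := by
  induction k with
  | zero => norm_num [cb]
  | succ n ih =>
      have h : cb (n+1) * (2*(n:ℝ)+2) = cb n * (2*(n:ℝ)+1) := by
        rw [cb_succ]
        have : (2*(n:ℝ)+2) ≠ 0 := by positivity
        field_simp
      have hsq : (cb (n+1))^2 * (2*(n:ℝ)+2)^2 = (cb n)^2 * (2*(n:ℝ)+1)^2 := by
        linear_combination (cb (n+1) * (2*(n:ℝ)+2) + cb n * (2*(n:ℝ)+1)) * h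
      have hn : (0:ℝ) ≤ (n:ℝ) := Nat.cast_nonneg n
      push_cast
      nlinarith [ih, hsq, sq_nonneg (cb (n+1)), sq_nonneg (cb n)]

lemma cb_tendsto : Filter.Tendsto cb Filter.atTop (nhds 0) := by
  have hub : ∀ k : ℕ, cb k ≤ Real.sqrt (1/(2*(k:ℝ)+1)) := by
    intro k
    have h1 : (cb k)^2 ≤ 1/(2*(k:ℝ)+1) := by
      have h2 : (0:ℝ) < 2*(k:ℝ)+1 := by positivity
      rw [le_div_iff₀ h2]
      exact cb_sq k
    calc cb k = Real.sqrt ((cb k)^2) := by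
            rw [Real.sqrt_sq (cb_pos k).le]
      _ ≤ Real.sqrt (1/(2*(k:ℝ)+1)) := Real.sqrt_le_sqrt h1
  have hT : Filter.Tendsto (fun k : ℕ => 1/(2*(k:ℝ)+1)) Filter.atTop (nhds 0) := by
    apply tendsto_of_tendsto_of_tendsto_of_le_of_le tendsto_const_nhds
      tendsto_one_div_add_atTop_nhds_zero_nat
    · intro n; positivity
    · intro n
      apply div_le_div_of_nonneg_left (by norm_num) (by positivity)
      have : (0:ℝ) ≤ (n:ℝ) := Nat.cast_nonneg n
      linarith
  have hsqrt : Filter.Tendsto (fun k : ℕ => Real.sqrt (1/(2*(k:ℝ)+1)))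
      Filter.atTop (nhds 0) := by
    exact (Real.continuous_sqrt.tendsto' 0 0 (by simp)).comp hT
  exact tendsto_of_tendsto_of_tendsto_of_le_of_le tendsto_const_nhds hsqrt
    (fun n => (cb_pos n).le) hub

lemma summable_diff : Summable (fun i : ℕ => cb (i+1) - cb (i+2)) := by
  apply summable_of_sum_range_le (c := cb 1)
  · intro i
    have h := cb_succ (i+1)
    have hp := cb_pos (i+1)
    rw [sub_nonneg, h]
    rw [div_le_iff₀ (by positivity)]
    nlinarith [Nat.cast_nonneg (α := ℝ) i]
  · intro n
    have h : ∑ i ∈ Finset.range n, (cb (i+1) - cb (i+2)) = cb 1 - cb (n+1) :=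
      Finset.sum_range_sub' (fun i => cb (i+1)) n
    rw [h]
    have := (cb_pos (n+1)).le
    linarith

lemma summable_term (k : ℕ) : Summable (fun i : ℕ => cb (i+1) / ((i:ℝ)+1+k)) := by
  refine Summable.of_nonneg_of_le ?_ ?_ (summable_diff.mul_left 4)
  · intro i
    have := (cb_pos (i+1)).le
    positivity
  · intro i
    have key : (4:ℝ)*(cb (i+1) - cb (i+2)) = 2*cb (i+1)/((i:ℝ)+2) := by
      rw [cb_succ (i+1)]
      push_cast
      have : ((i:ℝ)+2) ≠ 0 := by positivity
      field_simp
      ring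
    rw [key, div_le_div_iff₀ (by positivity) (by positivity)]
    nlinarith [cb_pos (i+1), Nat.cast_nonneg (α := ℝ) i, Nat.cast_nonneg (α := ℝ) k]

lemma hasSum_telescope {f : ℕ → ℝ} (hf : Summable (fun i => f i - f (i+1)))
    (hlim : Filter.Tendsto f Filter.atTop (nhds 0)) :
    HasSum (fun i => f i - f (i+1)) (f 0) := by
  have h1 := hf.hasSum
  have h2 := h1.tendsto_sum_nat
  have h3 : ∀ n, ∑ i ∈ Finset.range n, (f i - f (i+1)) = f 0 - f n :=
    fun n => Finset.sum_range_sub' f n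
  have h4 : Filter.Tendsto (fun n : ℕ => f 0 - f n) Filter.atTop (nhds (f 0 - 0)) :=
    tendsto_const_nhds.sub hlim
  have h5 : Filter.Tendsto (fun n : ℕ => ∑ i ∈ Finset.range n, (f i - f (i+1)))
      Filter.atTop (nhds (f 0 - 0)) := by
    simpa only [h3] using h4
  have := tendsto_nhds_unique h2 h5
  rw [sub_zero] at this
  rwa [this] at h1

lemma tendsto_two_cb : Filter.Tendsto (fun i : ℕ => 2 * cb (i+1)) Filter.atTop (nhds 0) := by
  have h := (cb_tendsto.comp (Filter.tendsto_add_atTop_nat 1)).const_mul 2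
  simpa using h

lemma hasSum_main (k : ℕ) (hk : 1 ≤ k) :
    HasSum (fun i : ℕ => cb (i+1) / ((i:ℝ)+1+k)) (1/(k * cb k) - 1/k) := by
  induction k, hk using Nat.le_induction with
  | base =>
      have hfun : ∀ i : ℕ, (fun i : ℕ => 2*cb (i+1) - 2*cb (i+1+1)) i
          = cb (i+1) / ((i:ℝ)+1+(1:ℕ)) := by
        intro i
        simp only
        rw [cb_succ (i+1)]
        push_cast
        have : ((i:ℝ)+1+1) ≠ 0 := by positivity
        field_simp
        ring
      have hsum : Summable (fun i : ℕ => 2*cb (i+1) - 2*cb (i+1+1)) := by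
        have := summable_diff.mul_left 2
        apply this.congr
        intro i
        show 2 * (cb (i+1) - cb (i+2)) = _
        ring_nf
      have hts : HasSum (fun i : ℕ => 2*cb (i+1) - 2*cb (i+1+1)) (2 * cb 1) :=
        hasSum_telescope (f := fun i => 2*cb (i+1)) hsum tendsto_two_cb
      have hval : 2 * cb 1 = 1/((1:ℕ) * cb 1) - 1/(1:ℕ) := by
        rw [cb_one]; norm_num
      rw [hval] at hts
      exact hts.congr_fun (fun i => (hfun i).symm)
  | succ k hk ih =>
      set E : ℕ → ℝ := fun i => 2*((i:ℝ)+1)*cb (i+1)/((i:ℝ)+1+k) with hE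
      have hEnonneg : ∀ i, 0 ≤ E i := by
        intro i
        have := (cb_pos (i+1)).le
        have : (0:ℝ) ≤ 2*((i:ℝ)+1)*cb (i+1) := by positivity
        apply div_nonneg this (by positivity)
      have hEle : ∀ i, E i ≤ 2 * cb (i+1) := by
        intro i
        rw [hE]
        simp only
        rw [div_le_iff₀ (by positivity)]
        nlinarith [cb_pos (i+1), Nat.cast_nonneg (α := ℝ) i, Nat.cast_nonneg (α := ℝ) k]
      have hElim : Filter.Tendsto E Filter.atTop (nhds 0) :=
        tendsto_of_tendsto_of_tendsto_of_le_of_le tendsto_const_nhds tendsto_two_cb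
          hEnonneg hEle
      have hdiff_eq : ∀ i : ℕ, E i - E (i+1)
          = (2*(k:ℝ)+1) * (cb (i+1)/((i:ℝ)+1+(k+1:ℕ))) - 2*(k:ℝ)*(cb (i+1)/((i:ℝ)+1+k)) := by
        intro i
        rw [hE]
        simp only
        rw [cb_succ (i+1)]
        push_cast
        have h1 : ((i:ℝ)+1+k) ≠ 0 := by positivity
        have h2 : ((i:ℝ)+1+1+k) ≠ 0 := by positivity
        have h3 : ((i:ℝ)+1+(k+1)) ≠ 0 := by positivity
        have h4 : (2*((i:ℝ)+1)+2) ≠ 0 := by positivity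
        field_simp
        ring
      have hsumdiff : Summable (fun i : ℕ => E i - E (i+1)) := by
        have hs : Summable (fun i : ℕ =>
            (2*(k:ℝ)+1) * (cb (i+1)/((i:ℝ)+1+(k+1:ℕ))) - 2*(k:ℝ)*(cb (i+1)/((i:ℝ)+1+k))) :=
          ((summable_term (k+1)).mul_left _).sub ((summable_term k).mul_left _)
        exact hs.congr (fun i => (hdiff_eq i).symm)
      have hEsum : HasSum (fun i : ℕ => E i - E (i+1)) (E 0) :=
        hasSum_telescope hsumdiff hElim
      have hE0 : E 0 = 1/((k:ℝ)+1) := by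
        rw [hE]
        simp only [Nat.cast_zero]
        rw [cb_one]
        norm_num
        ring
      have hcomb : HasSum (fun i : ℕ =>
          (2*(k:ℝ)) * (cb (i+1)/((i:ℝ)+1+k)) + (E i - E (i+1)))
          (2*(k:ℝ)*(1/(k * cb k) - 1/k) + E 0) :=
        (ih.mul_left _).add hEsum
      have hfinal := hcomb.div_const (2*(k:ℝ)+1)
      have hkR : (1:ℝ) ≤ (k:ℝ) := by exact_mod_cast hk
      have hne : (2*(k:ℝ)+1) ≠ 0 := by positivity
      have hfun2 : ∀ i : ℕ,
          ((2*(k:ℝ)) * (cb (i+1)/((i:ℝ)+1+k)) + (E i - E (i+1)))/(2*(k:ℝ)+1)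
          = cb (i+1)/((i:ℝ)+1+(k+1:ℕ)) := by
        intro i
        rw [hdiff_eq i]
        field_simp
        ring
      have hval : (2*(k:ℝ)*(1/(k * cb k) - 1/k) + E 0)/(2*(k:ℝ)+1)
          = 1/((k+1:ℕ) * cb (k+1)) - 1/(k+1:ℕ) := by
        rw [hE0, cb_succ k]
        have hc := cb_pos k
        have hkpos : (0:ℝ) < (k:ℝ) := by linarith
        push_cast
        field_simp
        ring
      rw [hval] at hfinal
      exact hfinal.congr_fun (fun i => (hfun2 i).symm)

theorem stmt_2 (k : ℕ) (hk : 0 < k) :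
    ∑' i : ℕ, (1/((i:ℝ)+1+k)) * cb (i+1)
      = (4:ℝ)^k / (k * (Nat.choose (2*k) k)) - 1/k := by
  have h := (hasSum_main k hk).tsum_eq
  have hfun : ∀ i : ℕ, (1/((i:ℝ)+1+k)) * cb (i+1) = cb (i+1) / ((i:ℝ)+1+k) := by
    intro i; rw [one_div_mul_eq_div]
  rw [tsum_congr hfun, h]
  have hC : (0:ℝ) < (Nat.choose (2*k) k : ℝ) := by
    exact_mod_cast Nat.choose_pos (by omega)
  have hkR : (0:ℝ) < (k:ℝ) := by exact_mod_cast hk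
  have h4 : (0:ℝ) < (4:ℝ)^k := by positivity
  congr 1
  unfold cb
  rw [eq_div_iff (by positivity)]
  field_simp
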